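/- Let 𝔄 be a C*-algebra, α an action of a compact abelian group G on 𝔄 and φ a pure state on the fixed point algebra 𝔄^α. Then for every γ ∈ Ĝ with P_γ ≠ 0 the representation ρ_γ of 𝔄^α is irreducible. -/

import Mathlib

open scoped ComplexOrder

/-- A state on a C*-algebra: a positive linear functional of norm one. -/
def IsState {A : Type*} [CStarAlgebra A] (φ : A →L[ℂ] ℂ) : Prop :=
  (∀ x : A, 0 ≤ φ (star x * x)) ∧ ‖φ‖ = 1

/-- The fixed point algebra `𝔄^α` of an action, as a star subalgebra. -/
def fixedAlg {G : Type*} [CommGroup G] {A : Type*} [CStarAlgebra A]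
    (α : G → A ≃⋆ₐ[ℂ] A) : StarSubalgebra ℂ A where
  carrier := {x | ∀ g, α g x = x}
  mul_mem' {x y} hx hy := fun g => by rw [map_mul, hx g, hy g]
  add_mem' {x y} hx hy := fun g => by rw [map_add, hx g, hy g]
  algebraMap_mem' c := fun g => by
    rw [Algebra.algebraMap_eq_smul_one, _root_.map_smul, map_one]
  star_mem' {x} hx := fun g => by rw [map_star, hx g]

/-- The spectral subspace `𝔄^α(γ)` of a character `γ` of `G`. -/
def specSet {G : Type*} [CommGroup G] [TopologicalSpace G] {A : Type*} [CStarAlgebra A]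
    (α : G → A ≃⋆ₐ[ℂ] A) (γ : ContinuousMonoidHom G Circle) : Set A :=
  {x | ∀ g, α g x = ((γ g : ℂ)) • x}

/-- The restriction of the state `ω` to the fixed point algebra is a pure state there.
(Every state of `𝔄^α` arises as such a restriction, and conversely; purity is expressed via
convex decompositions by states of `A`, using Hahn–Banach extension.) -/
def IsPureOnFixed {G : Type*} [CommGroup G] {A : Type*} [CStarAlgebra A]
    (α : G → A ≃⋆ₐ[ℂ] A) (ω : A →L[ℂ] ℂ) : Prop :=
  ∀ (ψ₁ ψ₂ : A →L[ℂ] ℂ) (t : ℝ), IsState ψ₁ → IsState ψ₂ → 0 < t → t < 1 →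
    (∀ a ∈ fixedAlg α, ω a = (t • ψ₁ + (1 - t) • ψ₂) a) →
    ∀ a ∈ fixedAlg α, ψ₁ a = ω a ∧ ψ₂ a = ω a

/-- The covariant GNS representation of an `α`-invariant state `ω`: cyclic representation
implementing `ω` as vector state, together with the canonical unitary implementation of the
group fixing the cyclic vector.  By uniqueness of the GNS construction this is *the* GNS
triple `(H, π, Ω)` of `ω`. -/
structure CovariantGNSRep (G : Type*) [CommGroup G] (A : Type*) [CStarAlgebra A]
    (α : G → A ≃⋆ₐ[ℂ] A) (H : Type*) [NormedAddCommGroup H] [InnerProductSpace ℂ H]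
    [CompleteSpace H] (ω : A →L[ℂ] ℂ) where
  π : A →⋆ₐ[ℂ] (H →L[ℂ] H)
  Ω : H
  U : G → (H →L[ℂ] H)
  cyclic : (Submodule.span ℂ (Set.range fun a => π a Ω)).topologicalClosure = ⊤
  vector_state : ∀ a, ω a = (inner ℂ Ω (π a Ω) : ℂ)
  U_unitary : ∀ g, U g ∈ unitary (H →L[ℂ] H)
  U_mul : ∀ g h, U (g * h) = U g * U h
  U_fix : ∀ g, U g Ω = Ω
  covariant : ∀ g x, U g * π x * star (U g) = π (α g x)

/-- The closed subspace `P_γ H = [π(𝔄^α(γ))Ω]`. -/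
def specSpan {G : Type*} [CommGroup G] [TopologicalSpace G] {A : Type*} [CStarAlgebra A]
    {α : G → A ≃⋆ₐ[ℂ] A} {H : Type*} [NormedAddCommGroup H] [InnerProductSpace ℂ H]
    [CompleteSpace H] {ω : A →L[ℂ] ℂ} (R : CovariantGNSRep G A α H ω)
    (γ : ContinuousMonoidHom G Circle) : Submodule ℂ H :=
  (Submodule.span ℂ {v : H | ∃ x ∈ specSet α γ, v = R.π x R.Ω}).topologicalClosure

/-- Irreducibility of the subrepresentation `ρ_γ` of `𝔄^α` on `P_γ H`. -/
def SubrepIrred {G : Type*} [CommGroup G] [TopologicalSpace G] {A : Type*} [CStarAlgebra A]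
    {α : G → A ≃⋆ₐ[ℂ] A} {H : Type*} [NormedAddCommGroup H] [InnerProductSpace ℂ H]
    [CompleteSpace H] {ω : A →L[ℂ] ℂ} (R : CovariantGNSRep G A α H ω)
    (γ : ContinuousMonoidHom G Circle) : Prop :=
  ∀ L : Submodule ℂ H, IsClosed (L : Set H) → L ≤ specSpan R γ →
    (∀ a ∈ fixedAlg α, ∀ v ∈ L, R.π a v ∈ L) → L = ⊥ ∨ L = specSpan R γ


section IrredHelpers

variable {A : Type*} [CStarAlgebra A]
variable {H : Type*} [NormedAddCommGroup H] [InnerProductSpace ℂ H] [CompleteSpace H]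

local notation "⟪" x ", " y "⟫" => @inner ℂ _ _ x y

private lemma aux_map_closure (T : H →L[ℂ] H) {s : Set H} {M : Submodule ℂ H}
    (hM : IsClosed (M : Set H)) (h : ∀ v ∈ s, T v ∈ M) :
    ∀ v ∈ (Submodule.span ℂ s).topologicalClosure, T v ∈ M := by
  intro v hv
  have h2 : (Submodule.span ℂ s).topologicalClosure ≤ M.comap (T : H →ₗ[ℂ] H) :=
    Submodule.topologicalClosure_minimal _
      (Submodule.span_le.2 fun v hv => Submodule.mem_comap.2 (h v hv))
      (hM.preimage T.continuous)
  exact h2 hv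

private lemma aux_orth {s : Set H} {w : H}
    (hw : w ∈ (Submodule.span ℂ s).topologicalClosure)
    (h : ∀ v ∈ s, ⟪v, w⟫ = 0) : w = 0 := by
  have h2 : (Submodule.span ℂ s).topologicalClosure ≤ (ℂ ∙ w)ᗮ :=
    Submodule.topologicalClosure_minimal _
      (Submodule.span_le.2 fun v hv =>
        Submodule.mem_orthogonal_singleton_iff_inner_left.2 (h v hv))
      (Submodule.isClosed_orthogonal _)
  exact inner_self_eq_zero.1 (Submodule.mem_orthogonal_singleton_iff_inner_left.1 (h2 hw))

private lemma pi_norm_le (π : A →⋆ₐ[ℂ] (H →L[ℂ] H)) (a : A) : ‖π a‖ ≤ ‖a‖ :=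
  NonUnitalStarAlgHom.norm_apply_le π a

private lemma pi_adj (π : A →⋆ₐ[ℂ] (H →L[ℂ] H)) (a : A) (u w : H) :
    ⟪u, π a w⟫ = ⟪π (star a) u, w⟫ := by
  rw [map_star, ContinuousLinearMap.star_eq_adjoint,
    ContinuousLinearMap.adjoint_inner_left]

private lemma pi_inner_bound (π : A →⋆ₐ[ℂ] (H →L[ℂ] H)) (u : H) (a : A) :
    ‖⟪u, π a u⟫‖ ≤ ‖u‖ ^ 2 * ‖a‖ := by
  calc ‖⟪u, π a u⟫‖ ≤ ‖u‖ * ‖π a u‖ := norm_inner_le_norm _ _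
    _ ≤ ‖u‖ * (‖π a‖ * ‖u‖) :=
      mul_le_mul_of_nonneg_left ((π a).le_opNorm u) (norm_nonneg u)
    _ ≤ ‖u‖ * (‖a‖ * ‖u‖) := by
      gcongr
      exact pi_norm_le π a
    _ = ‖u‖ ^ 2 * ‖a‖ := by ring

/-- The vector state `a ↦ ⟪u, π a u⟫`. -/
private noncomputable def vecState (π : A →⋆ₐ[ℂ] (H →L[ℂ] H)) (u : H) : A →L[ℂ] ℂ :=
  LinearMap.mkContinuous
    { toFun := fun a => ⟪u, π a u⟫
      map_add' := fun a b => by simp [map_add, inner_add_right]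
      map_smul' := fun c a => by simp [map_smul, inner_smul_right] }
    (‖u‖ ^ 2) (fun a => pi_inner_bound π u a)

private lemma vecState_apply (π : A →⋆ₐ[ℂ] (H →L[ℂ] H)) (u : H) (a : A) :
    vecState π u a = ⟪u, π a u⟫ := rfl

private lemma vecState_isState [Nontrivial A] (π : A →⋆ₐ[ℂ] (H →L[ℂ] H)) (u : H)
    (hu : ‖u‖ = 1) : IsState (vecState π u) := by
  constructor
  · intro a
    have h : vecState π u (star a * a) = ⟪π a u, π a u⟫ := by
      rw [vecState_apply, map_mul, ContinuousLinearMap.mul_apply, pi_adj, star_star]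
    rw [h, inner_self_eq_norm_sq_to_K]
    have h0 : (0:ℝ) ≤ ‖(π a) u‖ ^ 2 := by positivity
    have h2 := Complex.zero_le_real.2 h0
    push_cast at h2
    exact h2
  · refine le_antisymm ?_ ?_
    · refine ContinuousLinearMap.opNorm_le_bound _ zero_le_one ?_
      intro a
      have h := pi_inner_bound π u a
      rw [hu] at h
      rw [vecState_apply]
      simpa using h
    · have h1 : vecState π u 1 = 1 := by
        rw [vecState_apply, map_one, ContinuousLinearMap.one_apply,
          inner_self_eq_norm_sq_to_K, hu]
        norm_num
      have h2 := (vecState π u).le_opNorm 1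
      rw [h1, norm_one, norm_one, mul_one] at h2
      exact h2

end IrredHelpers

local notation "⟪" x ", " y "⟫" => @inner ℂ _ _ x y


/-- **Lemma 3.3**: if `φ` is a pure state of the fixed point algebra of an action of a compact
abelian group, then every nonzero subrepresentation `ρ_γ` of `𝔄^α` on `[π(𝔄^α(γ))Ω]` in the
GNS representation of `φ ∘ E` is irreducible. -/
theorem subrep_on_spectral_subspace_irreducible
    {G : Type*} [CommGroup G] [TopologicalSpace G] [IsTopologicalGroup G] [CompactSpace G]
    [T2Space G]
    {A : Type*} [CStarAlgebra A]
    (α : G → A ≃⋆ₐ[ℂ] A)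
    (hα1 : α 1 = StarAlgEquiv.refl ℂ A)
    (hαmul : ∀ g h, α (g * h) = (α h).trans (α g))
    (hcont : ∀ x : A, Continuous fun g => α g x)
    (ω : A →L[ℂ] ℂ) (hω : IsState ω) (hinv : ∀ g x, ω (α g x) = ω x)
    (hpure : IsPureOnFixed α ω)
    {H : Type*} [NormedAddCommGroup H] [InnerProductSpace ℂ H] [CompleteSpace H]
    (R : CovariantGNSRep G A α H ω) :
    ∀ γ : ContinuousMonoidHom G Circle, specSpan R γ ≠ ⊥ → SubrepIrred R γ := by
  intro γ hne L hLc hLle hLinv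
  by_cases hL0 : L = ⊥
  · exact Or.inl hL0
  right
  -- basic facts
  have hmulapply : ∀ (a b : A) (v : H), R.π a (R.π b v) = R.π (a * b) v := fun a b v => by
    rw [map_mul, ContinuousLinearMap.mul_apply]
  haveI hAnt : Nontrivial A := by
    by_contra hcon
    rw [not_nontrivial_iff_subsingleton] at hcon
    have hz : ω = 0 := by
      ext a
      rw [Subsingleton.elim a 0]
      simp
    rw [hz] at hω
    simpa using hω.2
  -- the cyclic vector is a unit vector
  have hΩ1 : ‖R.Ω‖ = 1 := by
    have hΩsq : ω 1 = ((‖R.Ω‖ : ℝ) : ℂ) ^ 2 := by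
      rw [R.vector_state 1, map_one, ContinuousLinearMap.one_apply, inner_self_eq_norm_sq_to_K]
      norm_cast
    have hle : ‖R.Ω‖ ^ 2 ≤ 1 := by
      have h2 := ω.le_opNorm 1
      rw [hω.2, norm_one, one_mul, hΩsq] at h2
      calc ‖R.Ω‖ ^ 2 = ‖((‖R.Ω‖ : ℝ) : ℂ) ^ 2‖ := by
            rw [norm_pow, Complex.norm_real, norm_norm]
        _ ≤ 1 := h2
    have hge : (1:ℝ) ≤ ‖R.Ω‖ ^ 2 := by
      have hb : ‖ω‖ ≤ ‖R.Ω‖ ^ 2 :=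
        ContinuousLinearMap.opNorm_le_bound _ (by positivity) (fun a => by
          rw [R.vector_state a]; exact pi_inner_bound R.π R.Ω a)
      rw [hω.2] at hb
      exact hb
    nlinarith [norm_nonneg R.Ω]
  -- circle values are unimodular
  have hcirc : ∀ g : G, star ((γ g : ℂ)) * (γ g : ℂ) = 1 := fun g => by
    rw [Complex.star_def, mul_comm, Complex.mul_conj, Circle.normSq_coe, Complex.ofReal_one]
  -- algebraic facts on spectral subspaces
  have hFmul : ∀ x ∈ specSet α γ, ∀ y ∈ specSet α γ, star x * y ∈ fixedAlg α := by
    intro x hx y hy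
    intro g
    rw [map_mul, map_star, hx g, hy g, star_smul, smul_mul_smul_comm, hcirc g, one_smul]
  have hsand : ∀ y ∈ specSet α γ, ∀ a ∈ fixedAlg α, ∀ x ∈ specSet α γ,
      y * a * star x ∈ fixedAlg α := by
    intro y hy a ha x hx
    intro g
    rw [map_mul, map_mul, map_star, hy g, hx g, ha g, star_smul, smul_mul_assoc,
      smul_mul_smul_comm, mul_comm ((γ g : ℂ)) (star ((γ g : ℂ))), hcirc g, one_smul]
  -- the subspace H0 = [π(A^α)Ω]
  set gens0 : Set H := {v | ∃ a ∈ fixedAlg α, v = R.π a R.Ω} with hgens0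
  set H0 : Submodule ℂ H := (Submodule.span ℂ gens0).topologicalClosure with hH0def
  have hH0closed : IsClosed (H0 : Set H) := Submodule.isClosed_topologicalClosure _
  have hΩH0 : R.Ω ∈ H0 :=
    Submodule.le_topologicalClosure _
      (Submodule.subset_span ⟨1, one_mem _, by rw [map_one, ContinuousLinearMap.one_apply]⟩)
  have hH0inv : ∀ a ∈ fixedAlg α, ∀ v ∈ H0, R.π a v ∈ H0 := by
    intro a ha
    refine aux_map_closure _ hH0closed ?_
    rintro v ⟨b, hb, rfl⟩
    exact Submodule.le_topologicalClosure _
      (Submodule.subset_span ⟨a * b, mul_mem ha hb, hmulapply a b R.Ω⟩)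
  -- pick a nonzero vector of L
  obtain ⟨ξ, hξL, hξ0⟩ := (Submodule.ne_bot_iff L).1 hL0
  have hξP : ξ ∈ specSpan R γ := hLle hξL
  -- Step A : some π(x*)ξ ≠ 0
  have hexists : ∃ x ∈ specSet α γ, R.π (star x) ξ ≠ 0 := by
    by_contra hcon
    push_neg at hcon
    refine hξ0 (aux_orth hξP ?_)
    rintro v ⟨x, hx, rfl⟩
    rw [← inner_conj_symm, pi_adj R.π x ξ R.Ω, hcon x hx, inner_zero_left, map_zero]
  obtain ⟨x, hxS, hη⟩ := hexists
  set η := R.π (star x) ξ with hηdef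
  have hηH0 : η ∈ H0 := by
    refine aux_map_closure (R.π (star x)) hH0closed ?_ ξ hξP
    rintro v ⟨y, hy, rfl⟩
    exact Submodule.le_topologicalClosure _
      (Submodule.subset_span ⟨star x * y, hFmul x hxS y hy, hmulapply _ _ _⟩)
  -- the subspace K = [π(A^α)η]
  set gensK : Set H := {v | ∃ a ∈ fixedAlg α, v = R.π a η} with hgensK
  set K : Submodule ℂ H := (Submodule.span ℂ gensK).topologicalClosure with hKdef
  have hKclosed : IsClosed (K : Set H) := Submodule.isClosed_topologicalClosure _
  have hηK : η ∈ K :=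
    Submodule.le_topologicalClosure _
      (Submodule.subset_span ⟨1, one_mem _, by rw [map_one, ContinuousLinearMap.one_apply]⟩)
  have hKinv : ∀ a ∈ fixedAlg α, ∀ v ∈ K, R.π a v ∈ K := by
    intro a ha
    refine aux_map_closure _ hKclosed ?_
    rintro v ⟨b, hb, rfl⟩
    exact Submodule.le_topologicalClosure _
      (Submodule.subset_span ⟨a * b, mul_mem ha hb, hmulapply a b η⟩)
  have hKH0 : K ≤ H0 := by
    refine Submodule.topologicalClosure_minimal _ (Submodule.span_le.2 ?_) hH0closed
    rintro v ⟨a, ha, rfl⟩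
    exact hH0inv a ha η hηH0
  haveI : CompleteSpace K := hKclosed.completeSpace_coe
  -- the orthogonal projection onto K
  set Q : H →L[ℂ] H := K.subtypeL ∘L K.orthogonalProjectionOnto with hQdef
  have hQmem : ∀ v, Q v ∈ K := fun v => (K.orthogonalProjectionOnto v).2
  have hQid : ∀ v ∈ K, Q v = v := fun v hv => K.starProjection_eq_self_iff.2 hv
  have hQperp : ∀ v ∈ Kᗮ, Q v = 0 := by
    intro v hv
    have h := Submodule.orthogonalProjectionOnto_apply_of_mem_orthogonal hv
    show (K.subtypeL (K.orthogonalProjectionOnto v) : H) = 0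
    rw [h]
    rfl
  have hQsub : ∀ v, v - Q v ∈ Kᗮ := fun v => K.sub_starProjection_mem_orthogonal v
  have hKperpinv : ∀ a ∈ fixedAlg α, ∀ w ∈ Kᗮ, R.π a w ∈ Kᗮ := by
    intro a ha w hw
    rw [Submodule.mem_orthogonal]
    intro u hu
    rw [pi_adj]
    exact (Submodule.mem_orthogonal _ _).1 hw _ (hKinv (star a) (star_mem ha) u hu)
  have hQcomm : ∀ a ∈ fixedAlg α, ∀ v, Q (R.π a v) = R.π a (Q v) := by
    intro a ha v
    have hsplit : R.π a v = R.π a (Q v) + R.π a (v - Q v) := by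
      rw [← map_add]
      congr 1
      abel
    rw [hsplit, map_add, hQid _ (hKinv a ha _ (hQmem v)),
      hQperp _ (hKperpinv a ha _ (hQsub v)), add_zero]
  set ξ1 : H := Q R.Ω with hξ1def
  set ξ2 : H := R.Ω - Q R.Ω with hξ2def
  have hsum : ξ1 + ξ2 = R.Ω := by rw [hξ1def, hξ2def]; abel
  have hξ1K : ξ1 ∈ K := hQmem _
  have hξ2perp : ξ2 ∈ Kᗮ := hQsub _
  -- Step C : K = H0 by purity
  have hKeqH0 : K = H0 := by
    by_cases hc2 : ξ2 = 0
    · have hΩK : R.Ω ∈ K := by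
        have hΩeq : R.Ω = ξ1 := by rw [← hsum, hc2, add_zero]
        rw [hΩeq]
        exact hξ1K
      refine le_antisymm hKH0 ?_
      refine Submodule.topologicalClosure_minimal _ (Submodule.span_le.2 ?_) hKclosed
      rintro v ⟨a, ha, rfl⟩
      exact hKinv a ha _ hΩK
    · exfalso
      by_cases hc1 : ξ1 = 0
      · have hH0perp : H0 ≤ Kᗮ := by
          refine Submodule.topologicalClosure_minimal _ (Submodule.span_le.2 ?_)
            (Submodule.isClosed_orthogonal _)
          rintro v ⟨a, ha, rfl⟩
          have h0 : Q (R.π a R.Ω) = 0 := by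
            rw [hQcomm a ha, ← hξ1def, hc1, map_zero]
          have h1 := hQsub (R.π a R.Ω)
          rwa [h0, sub_zero] at h1
        exact hη (inner_self_eq_zero.1
          ((Submodule.mem_orthogonal _ _).1 (hH0perp hηH0) η hηK))
      · -- the genuine purity argument
        have horth12 : ⟪ξ1, ξ2⟫ = 0 :=
          Submodule.inner_right_of_mem_orthogonal hξ1K hξ2perp
        have hpyth : ‖ξ1‖ ^ 2 + ‖ξ2‖ ^ 2 = 1 := by
          have h := norm_add_sq_eq_norm_sq_add_norm_sq_of_inner_eq_zero ξ1 ξ2 horth12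
          rw [hsum, hΩ1] at h
          nlinarith [h]
        set t : ℝ := ‖ξ1‖ ^ 2 with htdef
        have ht0 : 0 < t := by
          have := norm_pos_iff.2 hc1
          positivity
        have ht2 : ‖ξ2‖ ^ 2 = 1 - t := by rw [htdef]; linarith
        have ht1 : t < 1 := by
          have h2 : (0:ℝ) < ‖ξ2‖ ^ 2 := by
            have := norm_pos_iff.2 hc2
            positivity
          linarith
        have hr1 : ((‖ξ1‖ : ℝ) : ℂ) ≠ 0 := by
          exact_mod_cast Complex.ofReal_ne_zero.2 (norm_ne_zero_iff.2 hc1)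
        have hr2 : ((‖ξ2‖ : ℝ) : ℂ) ≠ 0 := by
          exact_mod_cast Complex.ofReal_ne_zero.2 (norm_ne_zero_iff.2 hc2)
        set u1 : H := (((‖ξ1‖ : ℝ) : ℂ))⁻¹ • ξ1 with hu1def
        set u2 : H := (((‖ξ2‖ : ℝ) : ℂ))⁻¹ • ξ2 with hu2def
        have hu1 : ‖u1‖ = 1 := by
          rw [hu1def, norm_smul, norm_inv, Complex.norm_real, norm_norm,
            inv_mul_cancel₀ (norm_ne_zero_iff.2 hc1)]
        have hu2 : ‖u2‖ = 1 := by
          rw [hu2def, norm_smul, norm_inv, Complex.norm_real, norm_norm,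
            inv_mul_cancel₀ (norm_ne_zero_iff.2 hc2)]
        have key1 : ∀ a : A, ((t : ℝ) : ℂ) * vecState R.π u1 a = ⟪ξ1, R.π a ξ1⟫ := by
          intro a
          rw [vecState_apply, hu1def, map_smul, inner_smul_left, inner_smul_right,
            map_inv₀, Complex.conj_ofReal, htdef]
          push_cast
          field_simp
        have key2 : ∀ a : A, (((1 - t : ℝ)) : ℂ) * vecState R.π u2 a = ⟪ξ2, R.π a ξ2⟫ := by
          intro a
          rw [vecState_apply, hu2def, map_smul, inner_smul_left, inner_smul_right,
            map_inv₀, Complex.conj_ofReal, ← ht2]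
          push_cast
          field_simp
        have hcross : ∀ a ∈ fixedAlg α, ⟪ξ1, R.π a ξ2⟫ = 0 ∧ ⟪ξ2, R.π a ξ1⟫ = 0 := by
          intro a ha
          constructor
          · exact Submodule.inner_right_of_mem_orthogonal hξ1K (hKperpinv a ha _ hξ2perp)
          · exact Submodule.inner_left_of_mem_orthogonal (hKinv a ha _ hξ1K) hξ2perp
        have hdecomp : ∀ a ∈ fixedAlg α,
            ω a = (t • vecState R.π u1 + (1 - t) • vecState R.π u2) a := by
          intro a ha
          rw [ContinuousLinearMap.add_apply, ContinuousLinearMap.smul_apply,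
            ContinuousLinearMap.smul_apply, Complex.real_smul, Complex.real_smul,
            key1 a, key2 a, R.vector_state a, ← hsum, map_add, inner_add_left,
            inner_add_right, inner_add_right, (hcross a ha).1, (hcross a ha).2,
            add_zero, zero_add]
        have hps := hpure (vecState R.π u1) (vecState R.π u2) t
          (vecState_isState R.π u1 hu1) (vecState_isState R.π u2 hu2) ht0 ht1 hdecomp
        have hkey : ∀ a ∈ fixedAlg α, ⟪ξ1, R.π a ξ1⟫ = ((t : ℝ) : ℂ) * ω a := by
          intro a ha
          rw [← key1 a, (hps a ha).1]
        -- ξ1 = t • Ω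
        have hw0 : ξ1 - ((t : ℝ) : ℂ) • R.Ω = 0 := by
          have hwH0 : ξ1 - ((t : ℝ) : ℂ) • R.Ω ∈ H0 :=
            Submodule.sub_mem _ (hKH0 hξ1K) (Submodule.smul_mem _ _ hΩH0)
          refine aux_orth hwH0 ?_
          rintro v ⟨a, ha, rfl⟩
          rw [inner_sub_right, inner_smul_right]
          have h1 : ⟪ξ1, R.π a R.Ω⟫ = ((t : ℝ) : ℂ) * ω a := by
            calc ⟪ξ1, R.π a R.Ω⟫ = ⟪ξ1, R.π a ξ1⟫ + ⟪ξ1, R.π a ξ2⟫ := by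
                  rw [← inner_add_right, ← map_add, hsum]
              _ = ((t : ℝ) : ℂ) * ω a := by rw [hkey a ha, (hcross a ha).1, add_zero]
          have h2 : ⟪R.π a R.Ω, ξ1⟫ = (starRingEnd ℂ) (((t : ℝ) : ℂ) * ω a) := by
            rw [← inner_conj_symm, h1]
          have h3 : ⟪R.π a R.Ω, R.Ω⟫ = (starRingEnd ℂ) (ω a) := by
            rw [← inner_conj_symm, ← R.vector_state a]
          rw [h2, h3, map_mul, Complex.conj_ofReal]
          ring
        have hξ1Ω : ξ1 = ((t : ℝ) : ℂ) • R.Ω := sub_eq_zero.1 hw0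
        have hteq : t = t ^ 2 := by
          have hn := congrArg norm hξ1Ω
          rw [norm_smul, hΩ1, mul_one, Complex.norm_real, Real.norm_eq_abs,
            abs_of_pos ht0] at hn
          calc t = ‖ξ1‖ ^ 2 := htdef
            _ = t ^ 2 := by rw [hn]
        nlinarith [hteq, ht0, ht1]
  -- Step D : specSpan ≤ L
  refine le_antisymm hLle ?_
  refine Submodule.topologicalClosure_minimal _ (Submodule.span_le.2 ?_) hLc
  rintro v ⟨y, hyS, rfl⟩
  have hmap : ∀ v ∈ K, R.π y v ∈ L := by
    refine aux_map_closure _ hLc ?_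
    rintro v ⟨a, ha, rfl⟩
    have heq : R.π y (R.π a η) = R.π (y * a * star x) ξ := by
      rw [hηdef, hmulapply, hmulapply, mul_assoc]
    rw [heq]
    exact hLinv _ (hsand y hyS a ha x hxS) ξ hξL
  exact hmap R.Ω (hKeqH0 ▸ hΩH0)
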